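/- Let G be a locally compact abelian group with Haar measure μ, let S ⊆ G satisfy D̄(#|_S;μ) = ρ ∈ (0,∞), and let H ⊆ G be a compact set satisfying the packing condition (H − H) ∩ (S − S) = {0}. Then μ(H) ≤ 1/ρ. -/

import Mathlib

open MeasureTheory Set Pointwise Filter ENNReal

/-- The uniform asymptotic upper density of a measure `ν` with respect to `μ`:
`inf` over nonempty compact sets `C` of `sup` over Borel sets `V` with compact
closure of `ν V / μ (C + V)`, where `C + V` is a Minkowski sum. -/
noncomputable def uaud {G : Type*} [AddCommGroup G] [TopologicalSpace G] [MeasurableSpace G]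
    (ν μ : Measure G) : ℝ≥0∞ :=
  ⨅ C ∈ {C : Set G | IsCompact C ∧ C.Nonempty},
    ⨆ V ∈ {V : Set G | MeasurableSet V ∧ IsCompact (closure V)},
      ν V / μ (C + V)

/-- The counting measure of the set `S`: the sum of Dirac measures at the points of `S`,
so that `countOn S V = #(S ∩ V)` for measurable `V`. -/
noncomputable def countOn {G : Type*} [MeasurableSpace G] (S : Set G) : Measure G :=
  Measure.sum (fun s : S => Measure.dirac (s : G))

/-- Key packing estimate: if `(H - H) ∩ (S - S) = {0}`, the translates `s + H` for
`s ∈ S` are pairwise disjoint, hence `#(S ∩ V) * μ H ≤ μ (H + V)`. -/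
lemma packing_key {G : Type*} [AddCommGroup G] [TopologicalSpace G] [IsTopologicalAddGroup G]
    [T2Space G] [MeasurableSpace G] [BorelSpace G]
    (μ : Measure G) [μ.IsAddHaarMeasure] (S : Set G)
    (H : Set G) (hH : IsCompact H) (hpack : (H - H) ∩ (S - S) = {0})
    (V : Set G) (hV : MeasurableSet V) :
    (Measure.sum (fun s : S => Measure.dirac (s : G))) V * μ H ≤ μ (H + V) := by
  classical
  rw [Measure.sum_apply _ hV]
  simp only [Measure.dirac_apply' _ hV]
  rw [ENNReal.tsum_eq_iSup_sum, ENNReal.iSup_mul]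
  refine iSup_le fun F => ?_
  set F' := F.filter (fun s : S => (s : G) ∈ V) with hF'
  have hsum : ∑ s ∈ F, V.indicator (1 : G → ℝ≥0∞) (s : G) = F'.card := by
    rw [hF', Finset.card_filter]
    push_cast
    refine Finset.sum_congr rfl fun s _ => ?_
    by_cases h : (s : G) ∈ V <;> simp [Set.indicator_apply, h]
  rw [hsum]
  have hdisj : (↑F' : Set ↥S).PairwiseDisjoint (fun s : S => (s : G) +ᵥ H) := by
    intro s _ t _ hst
    refine Set.disjoint_left.2 fun x hxs hxt => ?_
    obtain ⟨h1, h1H, rfl⟩ := hxs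
    obtain ⟨h2, h2H, heq⟩ := hxt
    have hmem : (s : G) - (t : G) ∈ (H - H) ∩ (S - S) := by
      refine ⟨?_, Set.sub_mem_sub s.2 t.2⟩
      have h3 : (s : G) - (t : G) = h2 - h1 := by
        rw [sub_eq_sub_iff_add_eq_add]
        simpa [vadd_eq_add, add_comm] using heq.symm
      rw [h3]
      exact Set.sub_mem_sub h2H h1H
    rw [hpack] at hmem
    exact hst (Subtype.ext (by rwa [Set.mem_singleton_iff, sub_eq_zero] at hmem))
  have hmeas : ∀ s : S, MeasurableSet ((s : G) +ᵥ H) :=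
    fun s => ((hH.vadd _).isClosed).measurableSet
  calc (F'.card : ℝ≥0∞) * μ H = ∑ s ∈ F', μ ((s : G) +ᵥ H) := by
        simp [measure_vadd, Finset.sum_const, nsmul_eq_mul]
    _ = μ (⋃ s ∈ F', (s : G) +ᵥ H) :=
        (measure_biUnion_finset hdisj fun s _ => hmeas s).symm
    _ ≤ μ (H + V) := by
        refine measure_mono (Set.iUnion₂_subset fun s hs => ?_)
        have hsV : (s : G) ∈ V := (Finset.mem_filter.1 hs).2
        rintro x ⟨h, hh, rfl⟩
        exact ⟨h, hh, s, hsV, by simp [vadd_eq_add, add_comm]⟩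

theorem packing_measure_bound {G : Type*} [AddCommGroup G]
    [TopologicalSpace G] [IsTopologicalAddGroup G] [LocallyCompactSpace G] [T2Space G]
    [MeasurableSpace G] [BorelSpace G]
    (μ : Measure G) [μ.IsAddHaarMeasure] (S : Set G) (ρ : ℝ≥0∞)
    (hρ : uaud (countOn S) μ = ρ) (hρ0 : 0 < ρ) (hρfin : ρ < ⊤)
    (H : Set G) (hH : IsCompact H)
    (hpack : (H - H) ∩ (S - S) = {0}) :
    μ H ≤ 1 / ρ := by
  rcases H.eq_empty_or_nonempty with rfl | hne
  · simp
  have hμHfin : μ H ≠ ⊤ := hH.measure_lt_top.ne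
  have h1 : ρ ≤ (μ H)⁻¹ := by
    rw [← hρ, uaud]
    refine le_trans
      (biInf_le _ (show H ∈ {C : Set G | IsCompact C ∧ C.Nonempty} from ⟨hH, hne⟩)) ?_
    refine iSup₂_le fun V hV => ?_
    by_cases h0 : μ H = 0
    · simp [h0]
    · rw [ENNReal.div_le_iff_le_mul (Or.inr (by simp [h0])) (Or.inr (by simp [hμHfin]))]
      rw [← ENNReal.div_eq_inv_mul, ENNReal.le_div_iff_mul_le (Or.inl h0) (Or.inl hμHfin)]
      exact packing_key μ S H hH hpack V hV.1
  rw [one_div, ← inv_inv (μ H)]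
  exact ENNReal.inv_le_inv.mpr h1
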